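/- Let G be a finite group with a normal cyclic subgroup H of order 3 such that G has no element of order 6, and suppose G = HK where K is a Sylow 2-subgroup with K ≠ 1. Then C_K(H) = 1, |K| = 2, and G is isomorphic to S_3. -/

import Mathlib

open Pointwise

private def permCongrMulEquiv {α β : Type*} (e : α ≃ β) :
    Equiv.Perm α ≃* Equiv.Perm β where
  toEquiv := e.permCongr
  map_mul' p q := by
    ext x
    simp [Equiv.permCongr_def]

theorem stmt_8 (G : Type*) [Group G] [Fintype G] (H : Subgroup G)
    (hN : H.Normal) (hH : IsCyclic H) (hcard : Nat.card H = 3)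
    (hno6 : ∀ g : G, orderOf g ≠ 6)
    (K : Sylow 2 G) (hK : (K : Subgroup G) ≠ ⊥)
    (hHK : H ⊔ (K : Subgroup G) = ⊤) :
    Subgroup.centralizer (H : Set G) ⊓ (K : Subgroup G) = ⊥ ∧
    Nat.card (K : Subgroup G) = 2 ∧
    Nonempty (G ≃* Equiv.Perm (Fin 3)) := by
  classical
  have hp3 : Fact (Nat.Prime 3) := ⟨by norm_num⟩
  obtain ⟨h0, hh0⟩ := exists_prime_orderOf_dvd_card' (G := H) 3 (by rw [hcard])
  set h : G := (h0 : G) with hh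
  have horder : orderOf h = 3 := by rw [← hh0]; exact Subgroup.orderOf_coe h0
  have hmem : h ∈ H := h0.2
  have h3 : h ^ 3 = 1 := by rw [← horder]; exact pow_orderOf_eq_one h
  have hne1 : h ≠ 1 := by
    intro e; rw [e, orderOf_one] at horder; omega
  have hHz : Subgroup.zpowers h = H := by
    apply Subgroup.eq_of_le_of_card_ge (Subgroup.zpowers_le.mpr hmem)
    rw [hcard, Nat.card_zpowers, horder]
  -- commuting with h implies centralizing H
  have hcent : ∀ x : G, h * x = x * h → x ∈ Subgroup.centralizer (H : Set G) := by
    intro x hx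
    rw [Subgroup.mem_centralizer_iff]
    intro g hg
    rw [← hHz] at hg
    obtain ⟨n, rfl⟩ := hg
    exact ((Commute.zpow_left (a := h) (b := x) hx n))
  -- Part 1
  have part1 : Subgroup.centralizer (H : Set G) ⊓ (K : Subgroup G) = ⊥ := by
    rw [Subgroup.eq_bot_iff_forall]
    intro x hx
    obtain ⟨hxC, hxK⟩ := Subgroup.mem_inf.mp hx
    by_contra hx1
    obtain ⟨m, hm⟩ := (IsPGroup.iff_orderOf.mp K.isPGroup') (⟨x, hxK⟩ : (K : Subgroup G))
    have hx2 : orderOf x = 2 ^ m := by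
      rw [← Subgroup.orderOf_coe (⟨x, hxK⟩ : (K : Subgroup G))] at hm
      exact hm
    have hm0 : m ≠ 0 := by
      intro e
      rw [e, pow_zero, orderOf_eq_one_iff] at hx2
      exact hx1 hx2
    set y : G := x ^ (2 ^ (m - 1)) with hy
    have hy2 : orderOf y = 2 := by
      rw [hy, orderOf_pow' x (pow_ne_zero _ (two_ne_zero)), hx2,
        Nat.gcd_eq_right (pow_dvd_pow 2 (by omega)),
        Nat.pow_div (by omega) (by norm_num)]
      have : m - (m - 1) = 1 := by omega
      rw [this, pow_one]
    have hyC : y ∈ Subgroup.centralizer (H : Set G) := Subgroup.pow_mem _ hxC _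
    have hcomm : h * y = y * h := Subgroup.mem_centralizer_iff.mp hyC h hmem
    have : orderOf (h * y) = 6 := by
      have := (Commute.orderOf_mul_eq_mul_orderOf_of_coprime (x := h) (y := y) hcomm
        (by rw [horder, hy2]; norm_num))
      rw [this, horder, hy2]
    exact hno6 _ this
  -- nontrivial elements of K invert h by conjugation
  have hconj : ∀ x ∈ (K : Subgroup G), x ≠ 1 → x * h * x⁻¹ = h⁻¹ := by
    intro x hxK hx1
    have haH : x * h * x⁻¹ ∈ H := hN.conj_mem h hmem x
    rw [← hHz] at haH
    obtain ⟨n, hn⟩ := mem_powers_iff_mem_zpowers.mpr haH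
    have hn' : h ^ (n % 3) = x * h * x⁻¹ := by
      have := pow_mod_orderOf h n
      rw [horder] at this
      rw [this]; exact hn
    have hlt : n % 3 < 3 := Nat.mod_lt _ (by norm_num)
    interval_cases hr : (n % 3)
    · exfalso
      rw [pow_zero] at hn'
      apply hne1
      have := congrArg (fun z => x⁻¹ * z * x) hn'
      simpa [mul_assoc] using this.symm
    · exfalso
      rw [pow_one] at hn'
      have hcomm : h * x = x * h := by
        have := congrArg (fun z => z * x) hn'
        simpa [mul_assoc] using this
      have : x ∈ Subgroup.centralizer (H : Set G) ⊓ (K : Subgroup G) :=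
        Subgroup.mem_inf.mpr ⟨hcent x hcomm, hxK⟩
      rw [part1, Subgroup.mem_bot] at this
      exact hx1 this
    · rw [← hn']
      apply eq_inv_of_mul_eq_one_left
      rw [← pow_succ]
      exact h3
  -- product of two nontrivial elements of K is 1
  have hmul : ∀ x ∈ (K : Subgroup G), ∀ y ∈ (K : Subgroup G), x ≠ 1 → y ≠ 1 → x * y = 1 := by
    intro x hx y hy hx1 hy1
    by_contra hxy1
    have hxyK : x * y ∈ (K : Subgroup G) := mul_mem hx hy
    have e1 := hconj _ hxyK hxy1
    have e2 := hconj _ hx hx1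
    have e3 := hconj _ hy hy1
    have e4 : (x * y) * h * (x * y)⁻¹ = h := by
      have : x * (y * h * y⁻¹) * x⁻¹ = x * h⁻¹ * x⁻¹ := by rw [e3]
      calc (x * y) * h * (x * y)⁻¹ = x * (y * h * y⁻¹) * x⁻¹ := by
            simp [mul_assoc]
        _ = x * h⁻¹ * x⁻¹ := this
        _ = (x * h * x⁻¹)⁻¹ := by simp [mul_assoc]
        _ = h := by rw [e2, inv_inv]
    rw [e1] at e4
    have : h ^ 2 = 1 := by
      rw [pow_two]
      nth_rewrite 1 [← e4]
      simp
    have hdvd : orderOf h ∣ 2 := orderOf_dvd_of_pow_eq_one this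
    rw [horder] at hdvd
    omega
  -- structure of K
  obtain ⟨⟨k, hkK⟩, hk1⟩ := Subgroup.ne_bot_iff_exists_ne_one.mp hK
  have hk1' : k ≠ 1 := fun e => hk1 (Subtype.ext e)
  have hkk : k * k = 1 := hmul k hkK k hkK hk1' hk1'
  have hkinv : k⁻¹ = k := inv_eq_of_mul_eq_one_left hkk
  have hx_eq_k : ∀ x ∈ (K : Subgroup G), x ≠ 1 → x = k := by
    intro x hx hx1
    have h1 := hmul x hx k hkK hx1 hk1'
    rw [eq_inv_of_mul_eq_one_left h1, hkinv]
  -- Part 2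
  have part2 : Nat.card (K : Subgroup G) = 2 := by
    rw [Nat.card_eq_two_iff]
    refine ⟨1, ⟨k, hkK⟩, fun e => hk1' (congrArg Subtype.val e).symm, ?_⟩
    rw [Set.eq_univ_iff_forall]
    rintro ⟨x, hx⟩
    by_cases hx1 : x = 1
    · left; exact Subtype.ext hx1
    · right
      exact Subtype.ext (hx_eq_k x hx hx1)
  -- |G| = 6
  have hdisj : Disjoint H (K : Subgroup G) :=
    disjoint_iff.mpr (Subgroup.inf_eq_bot_of_coprime (by rw [hcard, part2]; norm_num))
  have hmulset : (H : Set G) * ((K : Subgroup G) : Set G) = Set.univ := by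
    rw [← Subgroup.normal_mul, hHK, Subgroup.coe_top]
  have hcomp := Subgroup.isComplement'_of_disjoint_and_mul_eq_univ hdisj hmulset
  have hG6 : Nat.card G = 6 := by rw [← hcomp.card_mul, hcard, part2]
  -- the permutation action on cosets
  set Q := G ⧸ (K : Subgroup G) with hQ
  let φ := MulAction.toPermHom G Q
  have hker : ∀ x : G, φ x = 1 → x = 1 := by
    intro x hx
    have hx' : ∀ g : G, ((x * g : G) : Q) = (g : Q) := by
      intro g
      have := Equiv.Perm.ext_iff.mp hx (g : Q)
      exact this
    have hxK : x ∈ (K : Subgroup G) := by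
      have := hx' 1
      rw [mul_one] at this
      have := QuotientGroup.eq.mp this
      simpa using this
    by_contra hx1
    have hxx : x * x = 1 := hmul x hxK x hxK hx1 hx1
    have hxinv : x⁻¹ = x := inv_eq_of_mul_eq_one_left hxx
    have h2 := QuotientGroup.eq.mp (hx' h)
    have hmem2 : h⁻¹ * x⁻¹ * h ∈ (K : Subgroup G) := by
      simpa [mul_inv_rev, mul_assoc] using h2
    have hne : h⁻¹ * x⁻¹ * h ≠ 1 := by
      intro e
      apply hx1
      have : x⁻¹ = 1 := by
        have := congrArg (fun z => h * z * h⁻¹) e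
        simpa [mul_assoc] using this
      rw [← hxinv, this]
    have heq : h⁻¹ * x⁻¹ * h = k := hx_eq_k _ hmem2 hne
    have hxk : x = k := hx_eq_k x hxK hx1
    have hcomm : h * x = x * h := by
      rw [hxinv] at heq
      rw [← hxk] at heq
      have := congrArg (fun z => h * z) heq
      simp only [← mul_assoc, mul_inv_cancel, one_mul] at this
      rw [this]
    have : x ∈ Subgroup.centralizer (H : Set G) ⊓ (K : Subgroup G) :=
      Subgroup.mem_inf.mpr ⟨hcent x hcomm, hxK⟩
    rw [part1, Subgroup.mem_bot] at this
    exact hx1 this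
  have hinj : Function.Injective φ := (injective_iff_map_eq_one φ).mpr hker
  have hQ3 : Nat.card Q = 3 := by
    have hidx := Subgroup.index_mul_card (K : Subgroup G)
    rw [part2, hG6] at hidx
    have : (K : Subgroup G).index = 3 := by omega
    rw [← this]
    rfl
  letI : Fintype Q := Fintype.ofFinite Q
  have hbij : Function.Bijective φ := by
    rw [Nat.bijective_iff_injective_and_card]
    refine ⟨hinj, ?_⟩
    rw [hG6, Nat.card_eq_fintype_card, Fintype.card_perm, ← Nat.card_eq_fintype_card, hQ3]
    rfl
  have e2 : Q ≃ Fin 3 := Fintype.equivFinOfCardEq (by rw [← Nat.card_eq_fintype_card, hQ3])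
  exact ⟨part1, part2, ⟨(MulEquiv.ofBijective φ hbij).trans (permCongrMulEquiv e2)⟩⟩
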